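/- arXiv:1604.06309 — 3 statements merged into one kernel-verified Lean document; each statement's English description precedes it below -/
import Mathlib

section
/- Let r, s be nonzero elements of a field K and let V = K^n. Define the matrix R̂ = Σ_{i=1}^n E_{ii}⊗E_{ii} + r Σ_{i<j} E_{ji}⊗E_{ij} + s^{-1} Σ_{i<j} E_{ij}⊗E_{ji} + (1 - r s^{-1}) Σ_{i<j} E_{jj}⊗E_{ii} acting on V⊗V. Then R̂ satisfies the Hecke relation (R̂ - 1)(R̂ + r s^{-1}) = 0. -/
open Matrix Kronecker BigOperators

/-- Elementary matrix `E i j`. -/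
def Em (n : ℕ) (K : Type*) [Field K] (i j : Fin n) : Matrix (Fin n) (Fin n) K :=
  Matrix.single i j 1

/-- The Benkart–Witherspoon braiding matrix on `V ⊗ V`. -/
def Rhat (n : ℕ) (K : Type*) [Field K] (r s : K) :
    Matrix (Fin n × Fin n) (Fin n × Fin n) K :=
  (∑ i, Em n K i i ⊗ₖ Em n K i i) +
  ∑ i, ∑ j,
    if i < j then
      r • (Em n K j i ⊗ₖ Em n K i j) + s⁻¹ • (Em n K i j ⊗ₖ Em n K j i) +
        (1 - r * s⁻¹) • (Em n K j j ⊗ₖ Em n K i i)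
    else 0
private lemma ite_swap0 {K : Type*} [AddMonoid K] {c1 c2 : Prop} [Decidable c1] [Decidable c2] (u : K) :
    (if c1 then (if c2 then u else 0) else 0) = (if c2 then (if c1 then u else 0) else 0) := by
  split_ifs <;> rfl

private lemma ite_add3 {K : Type*} [AddGroup K] {c : Prop} [Decidable c] (x y z : K) :
    (if c then x + y + z else 0) = (if c then x else 0) + (if c then y else 0) + (if c then z else 0) := by
  split_ifs <;> simp

set_option maxHeartbeats 2000000 in
lemma Rhat_apply {K : Type*} [Field K] {n : ℕ} (r s : K) (a b c d : Fin n) :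
    Rhat n K r s (a,b) (c,d) =
      (if c = b ∧ d = a then (if a = b then 1 else if b < a then r else s⁻¹) else 0) +
      (if b < a ∧ c = a ∧ d = b then 1 - r*s⁻¹ else 0) := by
  simp only [Rhat, Em, Matrix.add_apply, Matrix.sum_apply, Matrix.kroneckerMap_apply,
    Matrix.single, Matrix.of_apply, apply_ite (f := fun M : Matrix (Fin n × Fin n) (Fin n × Fin n) K => M (a,b) (c,d)),
    Matrix.smul_apply, Matrix.zero_apply, smul_eq_mul]
  simp only [mul_ite, ite_mul, mul_one, one_mul, mul_zero, zero_mul]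
  simp only [ite_add3]
  simp only [ite_swap0 (c1 := _ < _)]
  simp only [ite_and, Finset.sum_ite_eq', Finset.sum_ite_eq, Finset.mem_univ, if_true]
  simp only [Finset.sum_add_distrib, Finset.sum_ite_irrel, Finset.sum_ite_eq',
    Finset.sum_ite_eq, Finset.mem_univ, if_true, Finset.sum_const_zero]
  split_ifs <;> first | ring1 | omega | (exfalso; omega)

set_option maxHeartbeats 1000000 in
lemma factor1 {K : Type*} [Field K] {n : ℕ} (r s : K) (a b : Fin n) (x : Fin n × Fin n) :
    (Rhat n K r s - 1) (a,b) x =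
      (if x = (b,a) then (if a = b then 1 else if b < a then r else s⁻¹) else 0) +
      (if x = (a,b) then (if b < a then 1 - r*s⁻¹ else 0) - 1 else 0) := by
  obtain ⟨c,d⟩ := x
  simp only [Matrix.sub_apply, Rhat_apply, Matrix.one_apply, Prod.mk.injEq]
  split_ifs <;> first | ring1 | omega | (exfalso; omega)

set_option maxHeartbeats 1000000 in
lemma factor2 {K : Type*} [Field K] {n : ℕ} (r s : K) (e f : Fin n) (x : Fin n × Fin n) :
    (Rhat n K r s + (r * s⁻¹) • (1 : Matrix (Fin n × Fin n) (Fin n × Fin n) K)) x (e,f) =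
      (if (e,f) = (x.2, x.1) then (if x.1 = x.2 then 1 else if x.2 < x.1 then r else s⁻¹) else 0) +
      (if (e,f) = x then (if x.2 < x.1 then 1 - r*s⁻¹ else 0) + r*s⁻¹ else 0) := by
  obtain ⟨c,d⟩ := x
  simp only [Matrix.add_apply, Rhat_apply, Matrix.smul_apply, Matrix.one_apply, smul_eq_mul,
    Prod.mk.injEq]
  split_ifs <;> first | ring1 | omega | (exfalso; omega)

set_option maxHeartbeats 1000000 in
theorem hecke_relation {K : Type*} [Field K] (n : ℕ) (r s : K)
    (hr : r ≠ 0) (hs : s ≠ 0) :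
    (Rhat n K r s - 1) * (Rhat n K r s + (r * s⁻¹) • (1 : Matrix (Fin n × Fin n) (Fin n × Fin n) K)) = 0 := by
  ext ⟨a,b⟩ ⟨e,f⟩
  rw [Matrix.mul_apply, Matrix.zero_apply]
  simp only [factor1, factor2, add_mul, ite_mul, zero_mul, Finset.sum_add_distrib,
    Finset.sum_ite_eq', Finset.mem_univ, if_true, Prod.mk.injEq]
  split_ifs <;> first | ring1 | omega | (exfalso; omega)
end

section
/- Let A be an associative unital algebra over a field K, and let B₁, B₂ ∈ A satisfy the braid relation B₁B₂B₁ = B₂B₁B₂ and the commutation conventions coming from a braiding: suppose B₁, B₂ are both invertible and satisfy the quadratic (Hecke) relations (B_i - λ₁)(B_i - λ₂) = 0 for nonzero scalars λ₁, λ₂ ∈ K. Define B_i(z) = λ₂^{-1} B_i + z λ₁ B_i^{-1} for a scalar z ∈ K. Then for all z, w ∈ K: B₁(z) B₂(zw) B₁(w) = B₂(w) B₁(zw) B₂(z). -/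
set_option maxHeartbeats 2000000


/-- Yang–Baxterization: a braid pair with two eigenvalues yields a
spectral-parameter solution of the braided Yang–Baxter equation. -/
theorem yang_baxterization {K A : Type*} [Field K] [Ring A] [Algebra K A]
    (B₁ B₂ B₁i B₂i : A) (lam₁ lam₂ : K) (h₁ : lam₁ ≠ 0) (h₂ : lam₂ ≠ 0)
    (hbraid : B₁ * B₂ * B₁ = B₂ * B₁ * B₂)
    (hinv₁ : B₁ * B₁i = 1) (hinv₁' : B₁i * B₁ = 1)
    (hinv₂ : B₂ * B₂i = 1) (hinv₂' : B₂i * B₂ = 1)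
    (hq₁ : (B₁ - algebraMap K A lam₁) * (B₁ - algebraMap K A lam₂) = 0)
    (hq₂ : (B₂ - algebraMap K A lam₁) * (B₂ - algebraMap K A lam₂) = 0) :
    ∀ z w : K,
      (lam₂⁻¹ • B₁ + (z * lam₁) • B₁i) * (lam₂⁻¹ • B₂ + (z * w * lam₁) • B₂i) *
          (lam₂⁻¹ • B₁ + (w * lam₁) • B₁i) =
        (lam₂⁻¹ • B₂ + (w * lam₁) • B₂i) * (lam₂⁻¹ • B₁ + (z * w * lam₁) • B₁i) *
          (lam₂⁻¹ • B₂ + (z * lam₁) • B₂i) := by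
  have hp : lam₁ * lam₂ ≠ 0 := mul_ne_zero h₁ h₂
  -- quadratic relation in the form B*B = (λ₁+λ₂)•B - (λ₁λ₂)•1
  have sq : ∀ B : A, (B - algebraMap K A lam₁) * (B - algebraMap K A lam₂) = 0 →
      B * B = (lam₁ + lam₂) • B - (lam₁ * lam₂) • (1 : A) := by
    intro B h
    have h' : B * B = (B - algebraMap K A lam₁) * (B - algebraMap K A lam₂)
        + ((lam₁ + lam₂) • B - (lam₁ * lam₂) • (1 : A)) := by
      simp only [Algebra.algebraMap_eq_smul_one, mul_sub, sub_mul, smul_mul_assoc,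
        mul_smul_comm, smul_smul, one_mul, mul_one]
      module
    rw [h', h, zero_add]
  -- explicit inverses
  have einv : ∀ B Bi : A, Bi * B = 1 →
      (B * B = (lam₁ + lam₂) • B - (lam₁ * lam₂) • (1 : A)) →
      Bi = (lam₁ * lam₂)⁻¹ • ((lam₁ + lam₂) • (1 : A) - B) := by
    intro B Bi hBi hsq
    have key : B * ((lam₁ * lam₂)⁻¹ • ((lam₁ + lam₂) • (1 : A) - B)) = 1 := by
      rw [mul_smul_comm, mul_sub, mul_smul_comm, mul_one, hsq]
      rw [sub_sub_cancel, smul_smul, inv_mul_cancel₀ hp, one_smul]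
    calc Bi = Bi * (B * ((lam₁ * lam₂)⁻¹ • ((lam₁ + lam₂) • (1 : A) - B))) := by
            rw [key, mul_one]
      _ = (Bi * B) * ((lam₁ * lam₂)⁻¹ • ((lam₁ + lam₂) • (1 : A) - B)) := by
            rw [mul_assoc]
      _ = (lam₁ * lam₂)⁻¹ • ((lam₁ + lam₂) • (1 : A) - B) := by rw [hBi, one_mul]
  have s₁ := sq B₁ hq₁
  have s₂ := sq B₂ hq₂
  have e₁ := einv B₁ B₁i hinv₁' s₁
  have e₂ := einv B₂ B₂i hinv₂' s₂
  -- rewrite the spectral-parameter operators as linear combinations of B and 1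
  have f : ∀ (B Bi : A), Bi = (lam₁ * lam₂)⁻¹ • ((lam₁ + lam₂) • (1 : A) - B) →
      ∀ u : K, lam₂⁻¹ • B + (u * lam₁) • Bi
        = (lam₂⁻¹ * (1 - u)) • B + (u * (lam₁ + lam₂) * lam₂⁻¹) • (1 : A) := by
    intro B Bi hBi u
    rw [hBi]
    match_scalars <;> field_simp <;> (try ring) <;> (simp only [inv_pow]; field_simp; ring)
  intro z w
  rw [f B₁ B₁i e₁ z, f B₁ B₁i e₁ w, f B₁ B₁i e₁ (z * w),
      f B₂ B₂i e₂ z, f B₂ B₂i e₂ w, f B₂ B₂i e₂ (z * w)]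
  have hb' : B₁ * (B₂ * B₁) = B₂ * (B₁ * B₂) := by
    rw [← mul_assoc, ← mul_assoc, hbraid]
  simp only [add_mul, mul_add, smul_mul_assoc, mul_smul_comm, smul_smul, mul_one,
    one_mul, smul_add, smul_sub, mul_assoc]
  rw [hb', s₁, s₂]
  match_scalars <;> field_simp <;> (try ring) <;> (simp only [inv_pow]; field_simp; ring)
end

section
/- Let r, s be nonzero elements of a field K. For z ∈ K with z ≠ 0 and 1 - zrs^{-1} ≠ 0, let R(z) be the two-parameter R-matrix R(z) = Σ_i E_{ii}⊗E_{ii} + ((1-z)r/(1-zrs^{-1})) Σ_{i>j} E_{ii}⊗E_{jj} + ((1-z)s^{-1}/(1-zrs^{-1})) Σ_{i<j} E_{ii}⊗E_{jj} + ((1-rs^{-1})/(1-zrs^{-1})) Σ_{i>j} E_{ij}⊗E_{ji} + ((1-rs^{-1})z/(1-zrs^{-1})) Σ_{i<j} E_{ij}⊗E_{ji}. Then for all valid z, w the quantum Yang–Baxter equation holds: R₁₂(z) R₁₃(zw) R₂₃(w) = R₂₃(w) R₁₃(zw) R₁₂(z) on (K^n)^{⊗3}. -/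
open Matrix Kronecker BigOperators

def RZ (n : ℕ) (K : Type*) [Field K] (r s z : K) :
    Matrix (Fin n × Fin n) (Fin n × Fin n) K :=
  (∑ i, Em n K i i ⊗ₖ Em n K i i)
  + ((1 - z) * r / (1 - z * r * s⁻¹)) • (∑ i, ∑ j, if j < i then Em n K i i ⊗ₖ Em n K j j else 0)
  + ((1 - z) * s⁻¹ / (1 - z * r * s⁻¹)) • (∑ i, ∑ j, if i < j then Em n K i i ⊗ₖ Em n K j j else 0)
  + ((1 - r * s⁻¹) / (1 - z * r * s⁻¹)) • (∑ i, ∑ j, if j < i then Em n K i j ⊗ₖ Em n K j i else 0)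
  + ((1 - r * s⁻¹) * z / (1 - z * r * s⁻¹)) • (∑ i, ∑ j, if i < j then Em n K i j ⊗ₖ Em n K j i else 0)

/-- `M` acting on factors 1 and 2 of `V ⊗ V ⊗ V`. -/
def op12 {n : ℕ} {K : Type*} [Field K] (M : Matrix (Fin n × Fin n) (Fin n × Fin n) K) :
    Matrix (Fin n × Fin n × Fin n) (Fin n × Fin n × Fin n) K :=
  fun p q => M (p.1, p.2.1) (q.1, q.2.1) * (if p.2.2 = q.2.2 then 1 else 0)

/-- `M` acting on factors 2 and 3 of `V ⊗ V ⊗ V`. -/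
def op23 {n : ℕ} {K : Type*} [Field K] (M : Matrix (Fin n × Fin n) (Fin n × Fin n) K) :
    Matrix (Fin n × Fin n × Fin n) (Fin n × Fin n × Fin n) K :=
  fun p q => (if p.1 = q.1 then 1 else 0) * M p.2 q.2

/-- `M` acting on factors 1 and 3 of `V ⊗ V ⊗ V`. -/
def op13 {n : ℕ} {K : Type*} [Field K] (M : Matrix (Fin n × Fin n) (Fin n × Fin n) K) :
    Matrix (Fin n × Fin n × Fin n) (Fin n × Fin n × Fin n) K :=
  fun p q => M (p.1, p.2.2) (q.1, q.2.2) * (if p.2.1 = q.2.1 then 1 else 0)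

section Aux

variable {n : ℕ} {K : Type*} [Field K]

lemma iteM {m : Type*} (c : Prop) [Decidable c] (A : Matrix m m K) (p q : m) :
    (if c then A else 0) p q = if c then A p q else 0 := by split_ifs <;> rfl

lemma swapIte (u v : Fin n) {α : Type*} [DecidableEq α] (x b : α) (a : K) :
    (if u < v then if x = b then a else 0 else 0) = if x = b then if u < v then a else 0 else 0 := by
  split_ifs <;> rfl

lemma L1 (i j k l : Fin n) : (∑ x, Em n K x x ⊗ₖ Em n K x x) (i,j) (k,l)
    = if i = j ∧ k = i ∧ l = i then 1 else 0 := by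
  simp only [Matrix.sum_apply, Em, Matrix.kroneckerMap_apply, Matrix.single,
    Matrix.of_apply, ite_and, mul_ite, ite_mul, mul_zero, zero_mul, mul_one,
    Finset.sum_ite_eq, Finset.sum_ite_eq', Finset.mem_univ, if_true]
  split_ifs <;> subst_vars <;> simp_all

lemma L2 (i j k l : Fin n) : (∑ x, ∑ y, if y < x then Em n K x x ⊗ₖ Em n K y y else 0) (i,j) (k,l)
    = if k = i ∧ l = j ∧ j < i then 1 else 0 := by
  simp only [Matrix.sum_apply, iteM, swapIte, Em, Matrix.kroneckerMap_apply,
    Matrix.single, Matrix.of_apply, ite_and, mul_ite, ite_mul, mul_zero, zero_mul, mul_one,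
    Finset.sum_ite_irrel, Finset.sum_ite_eq, Finset.sum_ite_eq', Finset.mem_univ, if_true,
    Finset.sum_const_zero]
  split_ifs <;> subst_vars <;> simp_all

lemma L3 (i j k l : Fin n) : (∑ x, ∑ y, if x < y then Em n K x x ⊗ₖ Em n K y y else 0) (i,j) (k,l)
    = if k = i ∧ l = j ∧ i < j then 1 else 0 := by
  simp only [Matrix.sum_apply, iteM, swapIte, Em, Matrix.kroneckerMap_apply,
    Matrix.single, Matrix.of_apply, ite_and, mul_ite, ite_mul, mul_zero, zero_mul, mul_one,
    Finset.sum_ite_irrel, Finset.sum_ite_eq, Finset.sum_ite_eq', Finset.mem_univ, if_true,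
    Finset.sum_const_zero]
  split_ifs <;> subst_vars <;> simp_all

lemma L4 (i j k l : Fin n) : (∑ x, ∑ y, if y < x then Em n K x y ⊗ₖ Em n K y x else 0) (i,j) (k,l)
    = if k = j ∧ l = i ∧ j < i then 1 else 0 := by
  simp only [Matrix.sum_apply, iteM, swapIte, Em, Matrix.kroneckerMap_apply,
    Matrix.single, Matrix.of_apply, ite_and, mul_ite, ite_mul, mul_zero, zero_mul, mul_one,
    Finset.sum_ite_irrel, Finset.sum_ite_eq, Finset.sum_ite_eq', Finset.mem_univ, if_true,
    Finset.sum_const_zero]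
  split_ifs <;> subst_vars <;> simp_all

lemma L5 (i j k l : Fin n) : (∑ x, ∑ y, if x < y then Em n K x y ⊗ₖ Em n K y x else 0) (i,j) (k,l)
    = if k = j ∧ l = i ∧ i < j then 1 else 0 := by
  simp only [Matrix.sum_apply, iteM, swapIte, Em, Matrix.kroneckerMap_apply,
    Matrix.single, Matrix.of_apply, ite_and, mul_ite, ite_mul, mul_zero, zero_mul, mul_one,
    Finset.sum_ite_irrel, Finset.sum_ite_eq, Finset.sum_ite_eq', Finset.mem_univ, if_true,
    Finset.sum_const_zero]
  split_ifs <;> subst_vars <;> simp_all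

def al (r s z : K) (i j : Fin n) : K :=
  if i = j then 1 else if j < i then (1-z)*r/(1-z*r*s⁻¹) else (1-z)*s⁻¹/(1-z*r*s⁻¹)

def be (r s z : K) (i j : Fin n) : K :=
  if i = j then 0 else if j < i then (1-r*s⁻¹)/(1-z*r*s⁻¹) else (1-r*s⁻¹)*z/(1-z*r*s⁻¹)

lemma al_self (r s z : K) (i : Fin n) : al r s z i i = 1 := if_pos rfl

lemma sub_ne (r s z : K) (hs : s ≠ 0) (hd : 1 - z*r*s⁻¹ ≠ 0) : s - z * r ≠ 0 := by
  intro h0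
  apply hd
  rw [sub_eq_zero] at h0
  rw [← h0, mul_inv_cancel₀ hs, sub_self]

lemma al_self' (r s z : K) (hs : s ≠ 0) (hd : 1 - z*r*s⁻¹ ≠ 0) (i : Fin n) :
    al r s z i i = (s - z*r)/(s - z*r) := by
  rw [al_self, div_self (sub_ne r s z hs hd)]

lemma be_self (r s z : K) (i : Fin n) : be r s z i i = 0 := if_pos rfl

lemma al_lt (r s z : K) {i j : Fin n} (h : i < j) :
    al r s z i j = (1-z)*s⁻¹/(1-z*r*s⁻¹) := by
  rw [al, if_neg h.ne, if_neg (asymm h)]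

lemma al_gt (r s z : K) {i j : Fin n} (h : j < i) :
    al r s z i j = (1-z)*r/(1-z*r*s⁻¹) := by
  rw [al, if_neg h.ne', if_pos h]

lemma be_lt (r s z : K) {i j : Fin n} (h : i < j) :
    be r s z i j = (1-r*s⁻¹)*z/(1-z*r*s⁻¹) := by
  rw [be, if_neg h.ne, if_neg (asymm h)]

lemma be_gt (r s z : K) {i j : Fin n} (h : j < i) :
    be r s z i j = (1-r*s⁻¹)/(1-z*r*s⁻¹) := by
  rw [be, if_neg h.ne', if_pos h]

lemma RZ_apply (r s z : K) (i j k l : Fin n) :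
    RZ n K r s z (i,j) (k,l) =
      (if k = i ∧ l = j then al r s z i j else 0)
      + (if k = j ∧ l = i then be r s z i j else 0) := by
  simp only [RZ, Matrix.add_apply, Matrix.smul_apply, L1, L2, L3, L4, L5, smul_eq_mul, al, be]
  rcases lt_trichotomy i j with h|h|h
  · simp only [h, h.ne, h.ne', not_lt_of_gt h, lt_irrefl, if_true, if_false, and_true, and_false,
      mul_zero, add_zero, zero_add, false_and, lt_asymm h, ite_false, ite_true]
    split_ifs <;> ring
  · subst h
    simp only [lt_irrefl, and_false, false_and, and_true, true_and, if_false, ite_false,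
      mul_zero, add_zero, zero_add, mul_one, ite_self]
    split_ifs <;> simp_all
  · simp only [h, h.ne, h.ne', not_lt_of_gt h, lt_irrefl, if_true, if_false, and_true, and_false,
      mul_zero, add_zero, zero_add, false_and, lt_asymm h, ite_false, ite_true]
    split_ifs <;> ring

lemma al_lt' (r s z : K) (hs : s ≠ 0) (hd : 1 - z*r*s⁻¹ ≠ 0) {i j : Fin n} (h : i < j) :
    al r s z i j = (1-z)/(s - z*r) := by
  rw [al_lt r s z h]
  have h2 := sub_ne r s z hs hd
  field_simp
  try ring

lemma al_gt' (r s z : K) (hs : s ≠ 0) (hd : 1 - z*r*s⁻¹ ≠ 0) {i j : Fin n} (h : j < i) :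
    al r s z i j = (1-z)*r*s/(s - z*r) := by
  rw [al_gt r s z h]
  have h2 := sub_ne r s z hs hd
  field_simp
  try ring

lemma be_lt' (r s z : K) (hs : s ≠ 0) (hd : 1 - z*r*s⁻¹ ≠ 0) {i j : Fin n} (h : i < j) :
    be r s z i j = (s-r)*z/(s - z*r) := by
  rw [be_lt r s z h]
  have h2 := sub_ne r s z hs hd
  field_simp
  try ring

lemma be_gt' (r s z : K) (hs : s ≠ 0) (hd : 1 - z*r*s⁻¹ ≠ 0) {i j : Fin n} (h : j < i) :
    be r s z i j = (s-r)/(s - z*r) := by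
  rw [be_gt r s z h]
  have h2 := sub_ne r s z hs hd
  field_simp
  try ring

def ind (K : Type*) [Field K] (P : Prop) [Decidable P] : K := if P then 1 else 0

lemma hoistMul (P : Prop) [Decidable P] (X Y : K) :
    (if P then X*Y else 0) = ind K P * (X*Y) := by rw [ind]; split_ifs <;> simp

lemma hoistAdd (P : Prop) [Decidable P] (X Y : K) :
    (if P then X+Y else 0) = ind K P * (X+Y) := by rw [ind]; split_ifs <;> simp

lemma hoistIte (P Q : Prop) [Decidable P] [Decidable Q] (X : K) :
    (if P then (if Q then X else 0) else 0) = ind K P * (if Q then X else 0) := by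
  rw [ind]; split_ifs <;> simp

end Aux

set_option maxHeartbeats 4000000 in
theorem quantum_yang_baxter {K : Type*} [Field K] (n : ℕ) (r s : K)
    (hr : r ≠ 0) (hs : s ≠ 0) :
    ∀ z w : K, z ≠ 0 → w ≠ 0 →
      1 - z * r * s⁻¹ ≠ 0 → 1 - z * w * r * s⁻¹ ≠ 0 → 1 - w * r * s⁻¹ ≠ 0 →
      op12 (RZ n K r s z) * op13 (RZ n K r s (z * w)) * op23 (RZ n K r s w) =
        op23 (RZ n K r s w) * op13 (RZ n K r s (z * w)) * op12 (RZ n K r s z) := by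
  intro z w hz hw d1 d2 d3
  funext p q
  obtain ⟨a, b, c⟩ := p
  obtain ⟨x, y, t⟩ := q
  rw [Matrix.mul_assoc, Matrix.mul_assoc]
  simp only [Matrix.mul_apply, Fintype.sum_prod_type, op12, op13, op23, RZ_apply]
  simp only [ite_and, mul_ite, ite_mul, mul_zero, zero_mul, mul_one, one_mul, add_mul, mul_add,
    Finset.sum_add_distrib, Finset.mul_sum, Finset.sum_mul, Finset.sum_ite_irrel,
    Finset.sum_const_zero, Finset.sum_ite_eq, Finset.sum_ite_eq', Finset.mem_univ, if_true]
  simp only [@eq_comm _ a, @eq_comm _ c]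
  trans ((if x = a then if y = b then if t = c then al r s z a b * (al r s (z*w) a c * al r s w b c) else 0 else 0 else 0) +
    (if x = b then if y = a then if t = c then be r s z a b * (al r s (z*w) b c * al r s w a c) else 0 else 0 else 0) +
    (if x = a then if y = c then if t = b then al r s z a b * (al r s (z*w) a c * be r s w b c) else 0 else 0 else 0) +
    (if x = b then if y = c then if t = a then be r s z a b * (al r s (z*w) b c * be r s w a c) else 0 else 0 else 0) +
    (if x = c then if y = b then if t = a then al r s z a b * (be r s (z*w) a c * al r s w b a) + be r s z a b * (be r s (z*w) b c * be r s w a b) else 0 else 0 else 0) +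
    (if x = c then if y = a then if t = b then be r s z a b * (be r s (z*w) b c * al r s w a b) + al r s z a b * (be r s (z*w) a c * be r s w b a) else 0 else 0 else 0))
  · split_ifs <;> subst_vars <;> first | ring | simp_all
  trans ((if x = a then if y = b then if t = c then al r s w b c * (al r s (z*w) a c * al r s z a b) else 0 else 0 else 0) +
    (if x = b then if y = a then if t = c then al r s w b c * (al r s (z*w) a c * be r s z a b) else 0 else 0 else 0) +
    (if x = a then if y = c then if t = b then be r s w b c * (al r s (z*w) a b * al r s z a c) else 0 else 0 else 0) +
    (if x = b then if y = c then if t = a then be r s w b c * (be r s (z*w) a b * al r s z b c) + al r s w b c * (be r s (z*w) a c * be r s z c b) else 0 else 0 else 0) +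
    (if x = c then if y = b then if t = a then al r s w b c * (be r s (z*w) a c * al r s z c b) + be r s w b c * (be r s (z*w) a b * be r s z b c) else 0 else 0 else 0) +
    (if x = c then if y = a then if t = b then be r s w b c * (al r s (z*w) a b * be r s z a c) else 0 else 0 else 0))
  · simp only [hoistIte, hoistMul, hoistAdd]
    have e1 := sub_ne r s z hs d1
    have e2 := sub_ne r s (z*w) hs d2
    have e3 := sub_ne r s w hs d3
    rcases lt_trichotomy a b with hab|hab|hab <;> rcases lt_trichotomy b c with hbc|hbc|hbc <;>
      rcases lt_trichotomy a c with hac|hac|hac <;>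
      first
        | omega
        | (subst_vars
           simp_all only [al_self' r s z hs d1, al_self' r s (z*w) hs d2, al_self' r s w hs d3,
             be_self, zero_mul, mul_zero, one_mul, mul_one, add_zero, zero_add, al_lt' r s z hs d1, al_gt' r s z hs d1, be_lt' r s z hs d1, be_gt' r s z hs d1, al_lt' r s (z*w) hs d2, al_gt' r s (z*w) hs d2, be_lt' r s (z*w) hs d2, be_gt' r s (z*w) hs d2, al_lt' r s w hs d3, al_gt' r s w hs d3, be_lt' r s w hs d3, be_gt' r s w hs d3]
           ring)
  · split_ifs <;> subst_vars <;> first | ring | simp_all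
end
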